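/- arXiv:1010.1653 — 2 statements merged into one kernel-verified Lean document; each statement's English description precedes it below -/
import Mathlib

section
/- Let m ≥ 2 be an integer, R₀ > 0 and λ > 0 real numbers, and g : [R₀, ∞) → ℝ a continuously differentiable function with g(r) > 0 for all r ≥ R₀, such that ∫_{R₀}^∞ g(t)^{m-1} dt = +∞. Let (R_n) be a strictly increasing sequence of reals with R_1 > R₀ and R_n → +∞, and for each n let h_n : [R₀, R_n] → ℝ be twice continuously differentiable with h_n(r) ≥ 0 on [R₀, R_n], h_n(R₀) = 1, h_n(R_n) = 0, and h_n''(r) + (m-1)·(g'(r)/g(r))·h_n'(r) = λ·h_n(r) on [R₀, R_n]. Suppose h : [R₀, ∞) → ℝ is twice continuously differentiable, satisfies h(r) > 0 for all r ≥ R₀, h''(r) + (m-1)·(g'(r)/g(r))·h'(r) = λ·h(r) on [R₀, ∞), and h(r) = lim_{n→∞} h_n(r) for every r ≥ R₀. Then h(r) → 0 as r → +∞. -/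
open Set MeasureTheory Filter

open Set MeasureTheory Filter

/-- Derivative of `x ↦ g x ^ (m-1) * u' x` for a solution of the ODE. -/
private lemma hasDerivAt_gpow_mul {m : ℕ} (hm : 2 ≤ m) {lam : ℝ} {g u : ℝ → ℝ} {r : ℝ}
    (hgr : g r ≠ 0)
    (hg : HasDerivAt g (deriv g r) r)
    (hu2 : HasDerivAt (deriv u) (deriv (deriv u) r) r)
    (hode : deriv (deriv u) r + ((m : ℝ) - 1) * (deriv g r / g r) * deriv u r = lam * u r) :
    HasDerivAt (fun x => g x ^ (m - 1) * deriv u x) (lam * g r ^ (m - 1) * u r) r := by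
  have h1 : HasDerivAt (fun x => g x ^ (m - 1))
      (((m - 1 : ℕ) : ℝ) * g r ^ (m - 1 - 1) * deriv g r) r := hg.pow (m - 1)
  have h2 := h1.mul hu2
  refine h2.congr_deriv ?_
  have hcast : ((m - 1 : ℕ) : ℝ) = (m : ℝ) - 1 := by
    have : 1 ≤ m := by omega
    push_cast [Nat.cast_sub this]; ring
  have h3 : deriv (deriv u) r = lam * u r - ((m : ℝ) - 1) * (deriv g r / g r) * deriv u r := by
    linarith [hode]
  have hmm : m - 1 - 1 = m - 2 := by omega
  have hpow : g r ^ (m - 1) = g r ^ (m - 2) * g r := by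
    rw [← pow_succ]; congr 1; omega
  rw [h3, hcast, hmm, hpow]
  field_simp
  ring

/-- Any nonnegative solution of the ODE on `[R₀, B]` vanishing at `B` is antitone. -/
private lemma antitoneOn_sol {m : ℕ} (hm : 2 ≤ m) {R₀ lam B : ℝ} (hlam : 0 < lam)
    {g : ℝ → ℝ} (hg : ContDiffOn ℝ 1 g (Set.Ici R₀)) (hgpos : ∀ r ∈ Set.Ici R₀, 0 < g r)
    (hB : R₀ < B) {u : ℝ → ℝ} (hu : ContDiffOn ℝ 2 u (Set.Icc R₀ B))
    (hnn : ∀ r ∈ Set.Icc R₀ B, 0 ≤ u r) (hub : u B = 0)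
    (hode : ∀ r ∈ Set.Icc R₀ B,
      deriv (deriv u) r + ((m : ℝ) - 1) * (deriv g r / g r) * deriv u r = lam * u r) :
    AntitoneOn u (Set.Icc R₀ B) := by
  have hgd : ∀ r ∈ Ioi R₀, HasDerivAt g (deriv g r) r := by
    intro r hr
    exact ((hg.differentiableOn one_ne_zero r (Ioi_subset_Ici_self hr)).differentiableAt
      (Ici_mem_nhds hr)).hasDerivAt
  have huo : ContDiffOn ℝ 2 u (Ioo R₀ B) := hu.mono Ioo_subset_Icc_self
  have hud : ∀ r ∈ Ioo R₀ B, HasDerivAt u (deriv u r) r := by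
    intro r hr
    exact ((huo.differentiableOn (by norm_num) r hr).differentiableAt
      (isOpen_Ioo.mem_nhds hr)).hasDerivAt
  have hud2C : ContDiffOn ℝ 1 (deriv u) (Ioo R₀ B) :=
    huo.deriv_of_isOpen isOpen_Ioo (by norm_num)
  have hud2 : ∀ r ∈ Ioo R₀ B, HasDerivAt (deriv u) (deriv (deriv u) r) r := by
    intro r hr
    exact ((hud2C.differentiableOn one_ne_zero r hr).differentiableAt
      (isOpen_Ioo.mem_nhds hr)).hasDerivAt
  set φ : ℝ → ℝ := fun x => g x ^ (m - 1) * deriv u x with hφdef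
  have hφd : ∀ r ∈ Ioo R₀ B, HasDerivAt φ (lam * g r ^ (m - 1) * u r) r := by
    intro r hr
    exact hasDerivAt_gpow_mul hm (hgpos r (le_of_lt hr.1)).ne' (hgd r hr.1) (hud2 r hr)
      (hode r (Ioo_subset_Icc_self hr))
  have key : ∀ r ∈ Ioo R₀ B, deriv u r ≤ 0 := by
    by_contra hcon
    push_neg at hcon
    obtain ⟨r₀, hr₀, hr₀pos⟩ := hcon
    have hφr₀pos : 0 < φ r₀ :=
      mul_pos (pow_pos (hgpos r₀ (le_of_lt hr₀.1)) _) hr₀pos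
    have hφpos : ∀ x ∈ Ico r₀ B, 0 < φ x := by
      intro x hx
      rcases eq_or_lt_of_le hx.1 with heq | hlt
      · rwa [← heq]
      · have hsub : Icc r₀ x ⊆ Ioo R₀ B := fun y hy =>
          ⟨lt_of_lt_of_le hr₀.1 hy.1, lt_of_le_of_lt hy.2 hx.2⟩
        have hmono : MonotoneOn φ (Icc r₀ x) := by
          apply monotoneOn_of_deriv_nonneg (convex_Icc _ _)
          · intro y hy
            exact ((hφd y (hsub hy)).continuousAt).continuousWithinAt
          · intro y hy
            rw [interior_Icc] at hy
            exact ((hφd y (hsub (Ioo_subset_Icc_self hy))).differentiableAt).differentiableWithinAt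
          · intro y hy
            rw [interior_Icc] at hy
            have hy' := hsub (Ioo_subset_Icc_self hy)
            rw [(hφd y hy').deriv]
            have := hnn y ⟨le_of_lt hy'.1, le_of_lt hy'.2⟩
            have := pow_pos (hgpos y (le_of_lt hy'.1)) (m - 1)
            positivity
        have := hmono (left_mem_Icc.mpr hlt.le) (right_mem_Icc.mpr hlt.le) hlt.le
        linarith
    have hsm : StrictMonoOn u (Icc r₀ B) := by
      apply strictMonoOn_of_deriv_pos (convex_Icc _ _)
      · exact hu.continuousOn.mono (Icc_subset_Icc hr₀.1.le le_rfl)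
      · intro x hx
        rw [interior_Icc] at hx
        have h1 : 0 < φ x := hφpos x ⟨hx.1.le, hx.2⟩
        have h2 : 0 < g x ^ (m - 1) :=
          pow_pos (hgpos x (le_of_lt (lt_trans hr₀.1 hx.1))) _
        have h3 : deriv u x = φ x / g x ^ (m - 1) := by
          rw [hφdef]; field_simp
        rw [h3]; exact div_pos h1 h2
    have h1 : u r₀ < u B :=
      hsm (left_mem_Icc.mpr hr₀.2.le) (right_mem_Icc.mpr hr₀.2.le) hr₀.2
    have h2 := hnn r₀ ⟨hr₀.1.le, hr₀.2.le⟩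
    rw [hub] at h1
    linarith
  apply antitoneOn_of_deriv_nonpos (convex_Icc _ _) hu.continuousOn
  · intro x hx
    rw [interior_Icc] at hx
    exact (hud x hx).differentiableAt.differentiableWithinAt
  · intro x hx
    rw [interior_Icc] at hx
    exact key x hx

/-- every model manifold with infinite volume (`∫ g^{m-1} = ∞`)
is Feller: the minimal positive solution `h` of the exterior problem, obtained
as limit of the Dirichlet solutions `hseq n`, tends to `0` at infinity. -/
theorem stmt_18 (m : ℕ) (hm : 2 ≤ m) (R₀ lam : ℝ) (hR₀ : 0 < R₀) (hlam : 0 < lam)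
    (g : ℝ → ℝ)
    (hg : ContDiffOn ℝ 1 g (Set.Ici R₀))
    (hgpos : ∀ r ∈ Set.Ici R₀, 0 < g r)
    (hgint : ¬ MeasureTheory.IntegrableOn (fun t => g t ^ (m - 1)) (Set.Ici R₀))
    (R : ℕ → ℝ) (hRmono : StrictMono R) (hR1 : R₀ < R 1)
    (hRtop : Filter.Tendsto R Filter.atTop Filter.atTop)
    (hseq : ℕ → ℝ → ℝ)
    (hseqC2 : ∀ n, ContDiffOn ℝ 2 (hseq n) (Set.Icc R₀ (R n)))
    (hseqnn : ∀ n, ∀ r ∈ Set.Icc R₀ (R n), 0 ≤ hseq n r)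
    (hseqa : ∀ n, hseq n R₀ = 1)
    (hseqb : ∀ n, hseq n (R n) = 0)
    (hseqode : ∀ n, ∀ r ∈ Set.Icc R₀ (R n),
      deriv (deriv (hseq n)) r + ((m : ℝ) - 1) * (deriv g r / g r) * deriv (hseq n) r
        = lam * hseq n r)
    (h : ℝ → ℝ)
    (hh : ContDiffOn ℝ 2 h (Set.Ici R₀))
    (hhpos : ∀ r ∈ Set.Ici R₀, 0 < h r)
    (hode : ∀ r ∈ Set.Ici R₀,
      deriv (deriv h) r + ((m : ℝ) - 1) * (deriv g r / g r) * deriv h r = lam * h r)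
    (hlim : ∀ r ∈ Set.Ici R₀,
      Filter.Tendsto (fun n => hseq n r) Filter.atTop (nhds (h r))) :
    Filter.Tendsto h Filter.atTop (nhds 0) := by
  -- Step 1: h is antitone on [R₀, ∞)
  have hanti : ∀ x ∈ Ici R₀, ∀ y ∈ Ici R₀, x ≤ y → h y ≤ h x := by
    intro x hx y hy hxy
    have hev : ∀ᶠ n in atTop, hseq n y ≤ hseq n x := by
      filter_upwards [hRtop.eventually_ge_atTop y, eventually_ge_atTop 1] with n hn hn1
      have hRn : R₀ < R n := lt_of_lt_of_le hR1 (hRmono.monotone hn1)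
      have hA := antitoneOn_sol hm hlam hg hgpos hRn (hseqC2 n) (hseqnn n) (hseqb n)
        (hseqode n)
      exact hA ⟨hx, le_trans hxy hn⟩ ⟨hy, hn⟩ hxy
    exact le_of_tendsto_of_tendsto (hlim y hy) (hlim x hx) hev
  -- Step 2: h tends to some limit L ≥ 0
  set h' : ℝ → ℝ := fun r => h (max r R₀) with hh'def
  have hanti' : Antitone h' := by
    intro x y hxy
    exact hanti (max x R₀) (le_max_right x R₀) (max y R₀) (le_max_right y R₀)
      (max_le_max hxy le_rfl)
  have hbdd : BddBelow (Set.range h') := by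
    refine ⟨0, ?_⟩
    rintro z ⟨r, rfl⟩
    exact (hhpos _ (le_max_right r R₀)).le
  set L : ℝ := ⨅ r, h' r with hLdef
  have htend' : Tendsto h' atTop (nhds L) := tendsto_atTop_ciInf hanti' hbdd
  have htend : Tendsto h atTop (nhds L) := by
    apply htend'.congr'
    filter_upwards [eventually_ge_atTop R₀] with r hr
    simp [hh'def, max_eq_left hr]
  have hL0 : 0 ≤ L := le_ciInf fun r => (hhpos _ (le_max_right r R₀)).le
  -- it suffices to show L = 0
  suffices hLz : L = 0 by rwa [hLz] at htend
  by_contra hLne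
  have hLpos : 0 < L := lt_of_le_of_ne hL0 (Ne.symm hLne)
  have hLle : ∀ r ∈ Ici R₀, L ≤ h r := by
    intro r hr
    have := ciInf_le hbdd r
    rwa [show h' r = h r by simp [hh'def, max_eq_left (mem_Ici.mp hr)]] at this
  -- Step 3: the weight function and its integral
  set f : ℝ → ℝ := fun t => g t ^ (m - 1) with hfdef
  have hfc : ContinuousOn f (Ici R₀) := (hg.continuousOn).pow _
  have hfnn : ∀ t ∈ Ici R₀, 0 ≤ f t := fun t ht => pow_nonneg (hgpos t ht).le _
  set a : ℝ := R₀ + 1 with hadef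
  have haR : R₀ < a := by rw [hadef]; linarith
  have hII : ∀ b c : ℝ, R₀ ≤ b → R₀ ≤ c → IntervalIntegrable f volume b c := by
    intro b c hb hc
    apply ContinuousOn.intervalIntegrable
    apply hfc.mono
    intro x hx
    rw [Set.uIcc_eq_union] at hx
    rcases hx with hx | hx
    · exact le_trans hb hx.1
    · exact le_trans hc hx.1
  set G : ℝ → ℝ := fun x => ∫ t in a..x, f t with hGdef
  have hGmono : ∀ x y : ℝ, a ≤ x → x ≤ y → G x ≤ G y := by
    intro x y hax hxy
    have h1 : G x + ∫ t in x..y, f t = G y :=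
      intervalIntegral.integral_add_adjacent_intervals
        (hII a x haR.le (le_trans haR.le hax))
        (hII x y (le_trans haR.le hax) (le_trans haR.le (le_trans hax hxy)))
    have h2 : 0 ≤ ∫ t in x..y, f t := by
      apply intervalIntegral.integral_nonneg hxy
      intro t ht
      exact hfnn t (le_trans haR.le (le_trans hax ht.1))
    linarith
  have hGtop : Tendsto G atTop atTop := by
    set Gm : ℝ → ℝ := fun x => G (max x a) with hGmdef
    have hGm : Monotone Gm := fun x y hxy =>
      hGmono _ _ (le_max_right _ _) (max_le_max hxy le_rfl)
    by_cases hbddG : BddAbove (Set.range Gm)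
    · exfalso
      apply hgint
      obtain ⟨I, hI⟩ := hbddG
      have hIoi : IntegrableOn f (Ioi a) volume := by
        apply MeasureTheory.integrableOn_Ioi_of_intervalIntegral_norm_bounded I a
          (b := fun i : ℝ => i) _ tendsto_id
        · filter_upwards [eventually_ge_atTop a] with i hi
          have hnorm : (∫ x in a..i, ‖f x‖) = G i := by
            apply intervalIntegral.integral_congr
            intro x hx
            rw [Set.uIcc_of_le hi] at hx
            exact Real.norm_of_nonneg (hfnn x (le_trans haR.le hx.1))
          rw [hnorm]
          have : G i = Gm i := by rw [hGmdef]; simp [max_eq_left hi]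
          rw [this]
          exact hI (Set.mem_range_self i)
        · intro i
          rcases le_or_gt i a with hia | hai
          · rw [Set.Ioc_eq_empty (by exact not_lt.mpr hia)]
            exact integrableOn_empty
          · exact ((hfc.mono (Set.Icc_subset_Ici_self.trans
              (Set.Ici_subset_Ici.mpr haR.le))).integrableOn_Icc).mono_set
              Set.Ioc_subset_Icc_self
      have hIcc : IntegrableOn f (Icc R₀ a) volume :=
        (hfc.mono Set.Icc_subset_Ici_self).integrableOn_Icc
      have : IntegrableOn f (Icc R₀ a ∪ Ioi a) volume := hIcc.union hIoi
      apply this.mono_set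
      intro x hx
      rcases le_or_gt x a with hxa | hax
      · exact Or.inl ⟨hx, hxa⟩
      · exact Or.inr hax
    · have htm : Tendsto Gm atTop atTop := tendsto_atTop_atTop_of_monotone' hGm hbddG
      apply htm.congr'
      filter_upwards [eventually_ge_atTop a] with x hx
      rw [hGmdef]; simp [max_eq_left hx]
  -- Step 4: derivative facts for h on (R₀, ∞)
  have hgd : ∀ r ∈ Ioi R₀, HasDerivAt g (deriv g r) r := by
    intro r hr
    exact ((hg.differentiableOn one_ne_zero r (Ioi_subset_Ici_self hr)).differentiableAt
      (Ici_mem_nhds hr)).hasDerivAt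
  have hho : ContDiffOn ℝ 2 h (Ioi R₀) := hh.mono Ioi_subset_Ici_self
  have hhd2C : ContDiffOn ℝ 1 (deriv h) (Ioi R₀) :=
    hho.deriv_of_isOpen isOpen_Ioi (by norm_num)
  have hhd2 : ∀ r ∈ Ioi R₀, HasDerivAt (deriv h) (deriv (deriv h) r) r := by
    intro r hr
    exact ((hhd2C.differentiableOn one_ne_zero r hr).differentiableAt
      (isOpen_Ioi.mem_nhds hr)).hasDerivAt
  set φ : ℝ → ℝ := fun x => g x ^ (m - 1) * deriv h x with hφdef
  have hφd : ∀ r ∈ Ioi R₀, HasDerivAt φ (lam * g r ^ (m - 1) * h r) r := by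
    intro r hr
    exact hasDerivAt_gpow_mul hm (hgpos r (Ioi_subset_Ici_self hr)).ne' (hgd r hr) (hhd2 r hr)
      (hode r (Ioi_subset_Ici_self hr))
  have hGd : ∀ r ∈ Ioi R₀, HasDerivAt G (f r) r := by
    intro r hr
    apply intervalIntegral.integral_hasDerivAt_right (hII a r haR.le (le_of_lt hr))
    · exact (hfc.mono Set.Ioi_subset_Ici_self).stronglyMeasurableAtFilter isOpen_Ioi r hr
    · exact (hfc.continuousAt (Ici_mem_nhds hr))
  set ψ : ℝ → ℝ := fun x => φ x - lam * L * G x with hψdef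
  have hψd : ∀ r ∈ Ioi R₀,
      HasDerivAt ψ (lam * g r ^ (m - 1) * h r - lam * L * f r) r := by
    intro r hr
    exact (hφd r hr).sub ((hGd r hr).const_mul _)
  have hψmono : MonotoneOn ψ (Ici a) := by
    apply monotoneOn_of_deriv_nonneg (convex_Ici a)
    · intro y hy
      exact ((hψd y (lt_of_lt_of_le haR hy)).continuousAt).continuousWithinAt
    · intro y hy
      rw [interior_Ici] at hy
      exact ((hψd y (lt_trans haR hy)).differentiableAt).differentiableWithinAt
    · intro y hy
      rw [interior_Ici] at hy
      have hy' : y ∈ Ioi R₀ := lt_trans haR hy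
      rw [(hψd y hy').deriv]
      have h1 : L ≤ h y := hLle y (Ioi_subset_Ici_self hy')
      have h2 : 0 ≤ g y ^ (m - 1) := (hfnn y (Ioi_subset_Ici_self hy'))
      have : lam * g y ^ (m - 1) * h y - lam * L * f y
          = lam * g y ^ (m - 1) * (h y - L) := by rw [hfdef]; ring
      rw [this]
      have : 0 ≤ h y - L := by linarith
      positivity
  have hGa : G a = 0 := intervalIntegral.integral_same
  have hgrow : ∀ x, a ≤ x → φ a + lam * L * G x ≤ φ x := by
    intro x hx
    have := hψmono (self_mem_Ici) hx hx
    rw [hψdef] at this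
    simp only [hGa, mul_zero, sub_zero] at this
    linarith
  have httop : Tendsto (fun x => φ a + lam * L * G x) atTop atTop := by
    apply tendsto_atTop_add_const_left
    exact hGtop.const_mul_atTop (by positivity)
  obtain ⟨x₀, hx₀pos, hx₀a⟩ :=
    ((httop.eventually_gt_atTop 0).and (eventually_ge_atTop a)).exists
  have hφpos : ∀ y ∈ Icc x₀ (x₀ + 1), 0 < φ y := by
    intro y hy
    have hy1 : a ≤ y := le_trans hx₀a hy.1
    have h1 := hgrow y hy1
    have h2 : G x₀ ≤ G y := hGmono _ _ hx₀a hy.1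
    have h3 : 0 ≤ lam * L := by positivity
    nlinarith
  have hsm : StrictMonoOn h (Icc x₀ (x₀ + 1)) := by
    apply strictMonoOn_of_deriv_pos (convex_Icc _ _)
    · exact hh.continuousOn.mono (fun y hy =>
        le_trans (le_trans haR.le hx₀a) hy.1)
    · intro y hy
      rw [interior_Icc] at hy
      have hyR : y ∈ Ioi R₀ := lt_of_le_of_lt (le_trans haR.le hx₀a) hy.1
      have h1 : 0 < φ y := hφpos y (Ioo_subset_Icc_self hy)
      have h2 : 0 < g y ^ (m - 1) := pow_pos (hgpos y (Ioi_subset_Ici_self hyR)) _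
      have h3 : deriv h y = φ y / g y ^ (m - 1) := by
        rw [hφdef]; field_simp
      rw [h3]; exact div_pos h1 h2
  have hx₀R : R₀ ≤ x₀ := le_trans haR.le hx₀a
  have h1 : h x₀ < h (x₀ + 1) :=
    hsm (left_mem_Icc.mpr (by linarith)) (right_mem_Icc.mpr (by linarith)) (by linarith)
  have h2 : h (x₀ + 1) ≤ h x₀ :=
    hanti x₀ hx₀R (x₀ + 1) (by simp only [mem_Ici]; linarith) (by linarith)
  linarith
end

section
/- Let m ≥ 2 be an integer, R₀ > 0 and λ > 0 real numbers, and g : [R₀, ∞) → ℝ a continuously differentiable function with g(r) > 0 for all r ≥ R₀, such that ∫_{R₀}^∞ g(t)^{1-m} dt < +∞. Let (R_n) be a strictly increasing sequence of reals with R_1 > R₀ and R_n → +∞, and for each n let h_n : [R₀, R_n] → ℝ be twice continuously differentiable with h_n(r) ≥ 0 on [R₀, R_n], h_n(R₀) = 1, h_n(R_n) = 0, and h_n''(r) + (m-1)·(g'(r)/g(r))·h_n'(r) = λ·h_n(r) on [R₀, R_n]. Suppose h : [R₀, ∞) → ℝ satisfies h(r) = lim_{n→∞} h_n(r) for every r ≥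 R₀. Then for every r ≥ R₀, h(r) ≤ (∫_r^∞ g(t)^{1-m} dt)/(∫_{R₀}^∞ g(t)^{1-m} dt); in particular h(r) → 0 as r → +∞. -/
open Set MeasureTheory Filter intervalIntegral

/-- Maximum principle: on `[R₀, b]` the Dirichlet solution is dominated by the harmonic
comparison function `r ↦ (∫_r^b g^{1-m})/(∫_{R₀}^b g^{1-m})`. -/
private lemma stmt19_key {m : ℕ} (hm : 2 ≤ m) {R₀ lam : ℝ} (hlam : 0 < lam) {g : ℝ → ℝ}
    (hg : ContDiffOn ℝ 1 g (Set.Ici R₀)) (hgpos : ∀ r ∈ Set.Ici R₀, 0 < g r)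
    {b : ℝ} (hb : R₀ < b) {H : ℝ → ℝ}
    (hC2 : ContDiffOn ℝ 2 H (Set.Icc R₀ b))
    (hnn : ∀ r ∈ Set.Icc R₀ b, 0 ≤ H r)
    (hHa : H R₀ = 1) (hHb : H b = 0)
    (hode : ∀ r ∈ Set.Icc R₀ b,
      deriv (deriv H) r + ((m : ℝ) - 1) * (deriv g r / g r) * deriv H r = lam * H r) :
    ∀ r ∈ Set.Icc R₀ b,
      H r ≤ (∫ t in r..b, (g t ^ (m - 1))⁻¹) / (∫ t in R₀..b, (g t ^ (m - 1))⁻¹) := by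
  set f : ℝ → ℝ := fun t => (g t ^ (m - 1))⁻¹ with hfdef
  have hfc : ContinuousOn f (Set.Ici R₀) :=
    (hg.continuousOn.pow _).inv₀ fun t ht => pow_ne_zero _ (hgpos t ht).ne'
  have hfpos : ∀ t ∈ Set.Ici R₀, 0 < f t := fun t ht => inv_pos.2 (pow_pos (hgpos t ht) _)
  have hfint : ∀ x ∈ Set.Icc R₀ b, ∀ y ∈ Set.Icc R₀ b, IntervalIntegrable f volume x y :=
    fun x hx y hy =>
      (hfc.mono ((uIcc_subset_Icc hx hy).trans Icc_subset_Ici_self)).intervalIntegrable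
  have hmemR₀ : R₀ ∈ Set.Icc R₀ b := ⟨le_rfl, hb.le⟩
  have hmemb : b ∈ Set.Icc R₀ b := ⟨hb.le, le_rfl⟩
  set J : ℝ := ∫ t in R₀..b, f t with hJdef
  have hJ : 0 < J :=
    intervalIntegral_pos_of_pos_on (hfint R₀ hmemR₀ b hmemb)
      (fun x hx => hfpos x hx.1.le) hb
  set P : ℝ → ℝ := fun r => ∫ t in R₀..r, f t with hPdef
  set v : ℝ → ℝ := fun r => (J - P r) / J with hvdef
  set w : ℝ → ℝ := fun r => H r - v r with hwdef
  have hPa : P R₀ = 0 := integral_same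
  have hPb : P b = J := rfl
  have hPcont : ContinuousOn P (Set.Icc R₀ b) := by
    have : IntegrableOn f (uIcc R₀ b) volume := by
      rw [uIcc_of_le hb.le]
      exact (hfc.mono Icc_subset_Ici_self).integrableOn_Icc
    have := continuousOn_primitive_interval (a := R₀) (b := b) this
    rwa [uIcc_of_le hb.le] at this
  have hwcont : ContinuousOn w (Set.Icc R₀ b) :=
    hC2.continuousOn.sub ((continuousOn_const.sub hPcont).div_const J)
  set ψ : ℝ → ℝ := fun s => g s ^ (m - 1) * deriv H s + 1 / J with hψdef
  -- derivative facts at interior points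
  have hint : ∀ x ∈ Set.Ioo R₀ b,
      HasDerivAt g (deriv g x) x ∧ HasDerivAt H (deriv H x) x ∧
      HasDerivAt (deriv H) (deriv (deriv H) x) x := by
    intro x hx
    have hIci : Set.Ici R₀ ∈ nhds x := Ici_mem_nhds hx.1
    have hIcc : Set.Icc R₀ b ∈ nhds x := Icc_mem_nhds hx.1 hx.2
    have hHC2x : ContDiffAt ℝ 2 H x := hC2.contDiffAt hIcc
    refine ⟨((hg.contDiffAt hIci).differentiableAt (by norm_num)).hasDerivAt,
      (hHC2x.differentiableAt (by norm_num)).hasDerivAt, ?_⟩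
    obtain ⟨u, hu, hu2⟩ := hHC2x.contDiffOn le_rfl (by norm_num)
    have hx' : x ∈ interior u := mem_interior_iff_mem_nhds.2 hu
    have hu' : ContDiffOn ℝ ((1 : ℕ) + 1) H (interior u) := by
      exact_mod_cast hu2.mono interior_subset
    have hder := ((contDiffOn_succ_iff_deriv_of_isOpen isOpen_interior).1 hu').2.2
    exact ((hder.differentiableOn (by norm_num)).differentiableAt
      (isOpen_interior.mem_nhds hx')).hasDerivAt
  have hψd : ∀ x ∈ Set.Ioo R₀ b, HasDerivAt ψ (g x ^ (m - 1) * (lam * H x)) x := by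
    intro x hx
    obtain ⟨hgd, hHd, hH'd⟩ := hint x hx
    have hgx : g x ≠ 0 := (hgpos x hx.1.le).ne'
    have h1 : HasDerivAt ψ
        (((m - 1 : ℕ) * g x ^ (m - 1 - 1) * deriv g x) * deriv H x
          + g x ^ (m - 1) * deriv (deriv H) x) x :=
      (((hgd.pow (m - 1)).mul hH'd).add_const (1 / J))
    convert h1 using 1
    have hpow : g x ^ (m - 1) = g x ^ (m - 1 - 1) * g x := by
      rw [← pow_succ]; congr 1; omega
    have hcast : ((m - 1 : ℕ) : ℝ) = (m : ℝ) - 1 := by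
      push_cast [Nat.cast_sub (by omega : 1 ≤ m)]; ring
    have hode' : deriv (deriv H) x
        = lam * H x - ((m : ℝ) - 1) * (deriv g x / g x) * deriv H x := by
      have := hode x ⟨hx.1.le, hx.2.le⟩; linarith
    rw [hode', hcast, hpow]
    field_simp
    ring
  have hψmono : MonotoneOn ψ (Set.Ioo R₀ b) := by
    apply monotoneOn_of_deriv_nonneg (convex_Ioo _ _)
    · exact fun x hx => (hψd x hx).continuousAt.continuousWithinAt
    · intro x hx
      rw [interior_Ioo] at hx
      exact (hψd x hx).differentiableAt.differentiableWithinAt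
    · intro x hx
      rw [interior_Ioo] at hx
      rw [(hψd x hx).deriv]
      exact mul_nonneg (pow_nonneg (hgpos x hx.1.le).le _)
        (mul_nonneg hlam.le (hnn x ⟨hx.1.le, hx.2.le⟩))
  have hwd : ∀ x ∈ Set.Ioo R₀ b, HasDerivAt w (f x * ψ x) x := by
    intro x hx
    obtain ⟨_, hHd, _⟩ := hint x hx
    have hxmem : x ∈ Set.Icc R₀ b := ⟨hx.1.le, hx.2.le⟩
    have hcx : ContinuousAt f x := hfc.continuousAt (Ici_mem_nhds hx.1)
    have hmeas : StronglyMeasurableAtFilter f (nhds x) volume :=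
      ContinuousOn.stronglyMeasurableAtFilter isOpen_Ioi
        (hfc.mono Ioi_subset_Ici_self) x hx.1
    have hPd : HasDerivAt P (f x) x :=
      integral_hasDerivAt_right (hfint R₀ hmemR₀ x hxmem) hmeas hcx
    have hvd : HasDerivAt v ((0 - f x) / J) x := (hasDerivAt_const x J).sub hPd |>.div_const J
    have := hHd.sub hvd
    convert this using 1
    have hgx0 : g x ^ (m - 1) ≠ 0 := pow_ne_zero _ (hgpos x hx.1.le).ne'
    show f x * (g x ^ (m - 1) * deriv H x + 1 / J) = deriv H x - (0 - f x) / J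
    rw [hfdef]
    field_simp
    rw [div_eq_iff (pow_ne_zero _ (hgpos x hx.1.le).ne'), sub_mul, sub_mul, zero_mul, one_div,
      inv_mul_cancel₀ (pow_ne_zero _ (hgpos x hx.1.le).ne')]
    ring
    all_goals rfl
  have hwa : w R₀ = 0 := by
    simp only [hwdef, hvdef, hHa, hPa, sub_zero, div_self hJ.ne']
    ring
  have hwb : w b = 0 := by
    simp only [hwdef, hvdef, hHb, hPb, sub_self, zero_div]
  have hwle : ∀ r ∈ Set.Icc R₀ b, w r ≤ 0 := by
    intro r hr
    rcases eq_or_lt_of_le hr.1 with he | h1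
    · rw [← he]; exact hwa.le
    rcases eq_or_lt_of_le hr.2 with he | h2
    · rw [he]; exact hwb.le
    have hrIoo : r ∈ Set.Ioo R₀ b := ⟨h1, h2⟩
    by_cases hψr : ψ r ≤ 0
    · have hanti : AntitoneOn w (Set.Icc R₀ r) := by
        apply antitoneOn_of_deriv_nonpos (convex_Icc _ _)
          (hwcont.mono (Icc_subset_Icc le_rfl h2.le))
        · intro x hx
          rw [interior_Icc] at hx
          exact (hwd x ⟨hx.1, hx.2.trans h2⟩).differentiableAt.differentiableWithinAt
        · intro x hx
          rw [interior_Icc] at hx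
          have hxIoo : x ∈ Set.Ioo R₀ b := ⟨hx.1, hx.2.trans h2⟩
          rw [(hwd x hxIoo).deriv]
          exact mul_nonpos_of_nonneg_of_nonpos (hfpos x hxIoo.1.le).le
            ((hψmono hxIoo hrIoo hx.2.le).trans hψr)
      have := hanti ⟨le_rfl, h1.le⟩ ⟨h1.le, le_rfl⟩ h1.le
      rw [hwa] at this; exact this
    · push_neg at hψr
      have hmono : MonotoneOn w (Set.Icc r b) := by
        apply monotoneOn_of_deriv_nonneg (convex_Icc _ _)
          (hwcont.mono (Icc_subset_Icc h1.le le_rfl))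
        · intro x hx
          rw [interior_Icc] at hx
          exact (hwd x ⟨h1.trans hx.1, hx.2⟩).differentiableAt.differentiableWithinAt
        · intro x hx
          rw [interior_Icc] at hx
          have hxIoo : x ∈ Set.Ioo R₀ b := ⟨h1.trans hx.1, hx.2⟩
          rw [(hwd x hxIoo).deriv]
          exact mul_nonneg (hfpos x hxIoo.1.le).le
            ((hψmono hrIoo hxIoo hx.1.le).trans' hψr.le)
      have := hmono ⟨le_rfl, h2.le⟩ ⟨h2.le, le_rfl⟩ h2.le
      rw [hwb] at this; exact this
  intro r hr
  have h1 := hwle r hr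
  have h2 : J - P r = ∫ t in r..b, f t :=
    integral_interval_sub_left (hfint R₀ hmemR₀ b hmemb) (hfint R₀ hmemR₀ r hr)
  have : H r ≤ v r := by simp only [hwdef] at h1; linarith
  rw [hvdef] at this
  simpa [h2] using this

/-- every non-parabolic model (`∫ g^{1-m} < ∞`) is Feller: the limit
`h` of the Dirichlet solutions is dominated by the normalized Green kernel
`r ↦ (∫_r^∞ g^{1-m})/(∫_{R₀}^∞ g^{1-m})`, and in particular `h → 0` at infinity. -/
theorem stmt_19 (m : ℕ) (hm : 2 ≤ m) (R₀ lam : ℝ) (hR₀ : 0 < R₀) (hlam : 0 < lam)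
    (g : ℝ → ℝ)
    (hg : ContDiffOn ℝ 1 g (Set.Ici R₀))
    (hgpos : ∀ r ∈ Set.Ici R₀, 0 < g r)
    (hgint : MeasureTheory.IntegrableOn (fun t => (g t ^ (m - 1))⁻¹) (Set.Ici R₀))
    (R : ℕ → ℝ) (hRmono : StrictMono R) (hR1 : R₀ < R 1)
    (hRtop : Filter.Tendsto R Filter.atTop Filter.atTop)
    (hseq : ℕ → ℝ → ℝ)
    (hseqC2 : ∀ n, ContDiffOn ℝ 2 (hseq n) (Set.Icc R₀ (R n)))
    (hseqnn : ∀ n, ∀ r ∈ Set.Icc R₀ (R n), 0 ≤ hseq n r)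
    (hseqa : ∀ n, hseq n R₀ = 1)
    (hseqb : ∀ n, hseq n (R n) = 0)
    (hseqode : ∀ n, ∀ r ∈ Set.Icc R₀ (R n),
      deriv (deriv (hseq n)) r + ((m : ℝ) - 1) * (deriv g r / g r) * deriv (hseq n) r
        = lam * hseq n r)
    (h : ℝ → ℝ)
    (hlim : ∀ r ∈ Set.Ici R₀,
      Filter.Tendsto (fun n => hseq n r) Filter.atTop (nhds (h r))) :
    (∀ r ∈ Set.Ici R₀,
      h r ≤ (∫ t in Set.Ici r, (g t ^ (m - 1))⁻¹) /
            (∫ t in Set.Ici R₀, (g t ^ (m - 1))⁻¹)) ∧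
    Filter.Tendsto h Filter.atTop (nhds 0) := by
  set f : ℝ → ℝ := fun t => (g t ^ (m - 1))⁻¹ with hfdef
  have hfc : ContinuousOn f (Set.Ici R₀) :=
    (hg.continuousOn.pow _).inv₀ fun t ht => pow_ne_zero _ (hgpos t ht).ne'
  have hfpos : ∀ t ∈ Set.Ici R₀, 0 < f t := fun t ht => inv_pos.2 (pow_pos (hgpos t ht) _)
  have hfnn : 0 ≤ᵐ[volume.restrict (Set.Ici R₀)] f :=
    (ae_restrict_iff' measurableSet_Ici).2 (Filter.Eventually.of_forall
      fun x hx => (hfpos x hx).le)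
  set G : ℝ → ℝ := fun r => ∫ t in Set.Ici r, f t with hGdef
  -- positivity of the total Green integral
  have hGpos : 0 < G R₀ := by
    have hint1 : IntervalIntegrable f volume R₀ (R 1) := by
      apply ContinuousOn.intervalIntegrable
      apply hfc.mono
      rw [uIcc_of_le hR1.le]
      exact Icc_subset_Ici_self
    have h1 : (0 : ℝ) < ∫ t in R₀..R 1, f t :=
      intervalIntegral_pos_of_pos_on hint1 (fun x hx => hfpos x hx.1.le) hR1
    have h2 : (∫ t in R₀..R 1, f t) ≤ G R₀ := by
      rw [intervalIntegral.integral_of_le hR1.le]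
      exact setIntegral_mono_set hgint hfnn
        (HasSubset.Subset.eventuallyLE (Set.Ioc_subset_Icc_self.trans Set.Icc_subset_Ici_self))
    linarith
  -- convergence of the truncated denominators
  have hDlim : Tendsto (fun n => ∫ t in R₀..R n, f t) atTop (nhds (G R₀)) := by
    have hunion : (⋃ n, Set.Ioc R₀ (R n)) = Set.Ioi R₀ := by
      ext x
      simp only [Set.mem_iUnion, Set.mem_Ioc, Set.mem_Ioi]
      constructor
      · rintro ⟨n, hn, _⟩; exact hn
      · intro hx
        obtain ⟨n, hn⟩ := (hRtop.eventually_ge_atTop x).exists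
        exact ⟨n, hx, hn⟩
    have hT := tendsto_setIntegral_of_monotone (μ := volume) (f := f)
      (s := fun n => Set.Ioc R₀ (R n)) (fun n => measurableSet_Ioc)
      (fun i j hij => Set.Ioc_subset_Ioc le_rfl (hRmono.monotone hij))
      (by rw [hunion]; exact hgint.mono_set Ioi_subset_Ici_self)
    rw [hunion] at hT
    have heq : G R₀ = ∫ t in Set.Ioi R₀, f t := MeasureTheory.integral_Ici_eq_integral_Ioi
    rw [← heq] at hT
    apply hT.congr'
    filter_upwards [hRtop.eventually_ge_atTop R₀] with n hn
    exact (intervalIntegral.integral_of_le hn).symm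
  -- the main bound
  have bound : ∀ r ∈ Set.Ici R₀, h r ≤ G r / G R₀ := by
    intro r hr
    have hGrint : IntegrableOn f (Set.Ici r) := hgint.mono_set (Set.Ici_subset_Ici.2 hr)
    have hfnnr : 0 ≤ᵐ[volume.restrict (Set.Ici r)] f :=
      (ae_restrict_iff' measurableSet_Ici).2 (Filter.Eventually.of_forall
        fun x hx => (hfpos x (Set.Ici_subset_Ici.2 hr hx)).le)
    have hev : ∀ᶠ n in atTop, hseq n r ≤ G r / (∫ t in R₀..R n, f t) := by
      filter_upwards [hRtop.eventually_gt_atTop r] with n hn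
      have hbn : R₀ < R n := lt_of_le_of_lt hr hn
      have h1 := stmt19_key hm hlam hg hgpos hbn (hseqC2 n) (hseqnn n) (hseqa n)
        (hseqb n) (hseqode n) r ⟨hr, hn.le⟩
      have h2 : (∫ t in r..R n, f t) ≤ G r := by
        rw [intervalIntegral.integral_of_le hn.le]
        exact setIntegral_mono_set hGrint hfnnr
          (HasSubset.Subset.eventuallyLE (Set.Ioc_subset_Icc_self.trans Set.Icc_subset_Ici_self))
      have hintn : IntervalIntegrable f volume R₀ (R n) := by
        apply ContinuousOn.intervalIntegrable
        apply hfc.mono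
        rw [uIcc_of_le hbn.le]
        exact Icc_subset_Ici_self
      have hJn : 0 < ∫ t in R₀..R n, f t :=
        intervalIntegral_pos_of_pos_on hintn (fun x hx => hfpos x hx.1.le) hbn
      refine h1.trans ?_
      gcongr
    have hRHS : Tendsto (fun n => G r / (∫ t in R₀..R n, f t)) atTop (nhds (G r / G R₀)) :=
      tendsto_const_nhds.div hDlim hGpos.ne'
    exact le_of_tendsto_of_tendsto (hlim r hr) hRHS hev
  refine ⟨bound, ?_⟩
  -- the Green kernel tends to zero
  have hG0 : Tendsto G atTop (nhds 0) := by
    have hT := tendsto_setIntegral_of_antitone (μ := volume) (f := f)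
      (s := fun r : ℝ => Set.Ici r) (fun r => measurableSet_Ici)
      (fun i j hij => Set.Ici_subset_Ici.2 hij) ⟨R₀, hgint⟩
    have hempty : (⋂ r : ℝ, Set.Ici r) = (∅ : Set ℝ) := by
      apply Set.eq_empty_of_forall_notMem
      intro x hx
      simp only [Set.mem_iInter, Set.mem_Ici] at hx
      linarith [hx (x + 1)]
    rwa [hempty, Measure.restrict_empty, integral_zero_measure] at hT
  have hnn' : ∀ᶠ r in atTop, 0 ≤ h r := by
    filter_upwards [eventually_ge_atTop R₀] with r hr
    apply ge_of_tendsto (hlim r hr)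
    filter_upwards [hRtop.eventually_ge_atTop r] with n hn
    exact hseqnn n r ⟨hr, hn⟩
  have hub : ∀ᶠ r in atTop, h r ≤ G r / G R₀ := by
    filter_upwards [eventually_ge_atTop R₀] with r hr using bound r hr
  have hdiv : Tendsto (fun r => G r / G R₀) atTop (nhds 0) := by
    simpa using hG0.div_const (G R₀)
  exact tendsto_of_tendsto_of_tendsto_of_le_of_le' tendsto_const_nhds hdiv hnn' hub
end
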